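/- arXiv:math/0606150 — 3 statements merged into one kernel-verified Lean document; each statement's English description precedes it below -/
import Mathlib

section
/- Taylor re-expansion is multiplicative: for noncommutative power series f = Σ_I a_I (x−p)^I and f̃ = Σ_I ã_I (x−p)^I both convergent on P(p,r), and q ∈ P(p,r), the re-expansion map α(p,q) defined by α(p,q)(f) = Σ_J a_J(q) (x−q)^J with a_J(q) = Σ_{I≥J} (I choose J) a_I (q−p)^{I−J} satisfies α(p,q)(f·f̃) = α(p,q)(f)·α(p,q)(f̃); together with its obvious additivity and unitality, α(p,q) is an algebra homomorphism. -/
/-- Convolution product on noncommutative power series. -/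
noncomputable def ncMul {n : ℕ} (f g : List (Fin n) → ℂ) : List (Fin n) → ℂ :=
  fun K => ∑ i ∈ Finset.range (K.length + 1), f (K.take i) * g (K.drop i)

/-- `(I choose J)`: the number of order-preserving injective letter-respecting
maps from `J` to `I`. -/
noncomputable def chooseCount {n : ℕ} (I J : List (Fin n)) : ℕ :=
  Set.ncard {α : Fin J.length → Fin I.length |
    StrictMono α ∧ ∀ k, J.get k = I.get (α k)}

/-- `w^I`: product of the values of `w` over the letters of the word `I`. -/
def wprod {n : ℕ} (w : Fin n → ℂ) (I : List (Fin n)) : ℂ := (I.map w).prod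

/-- `(q−p)^{I−J}` (multiset difference of letters; independent of embedding). -/
noncomputable def diffProd {n : ℕ} (p q : Fin n → ℂ) (I J : List (Fin n)) : ℂ :=
  (((I : Multiset (Fin n)) - (J : Multiset (Fin n))).map
    fun i => q i - p i).prod

/-- The re-expansion coefficient `a_J(q) = Σ_{I ≥ J} (I choose J) a_I (q−p)^{I−J}`. -/
noncomputable def reCoeff {n : ℕ} (a : List (Fin n) → ℂ) (p q : Fin n → ℂ)
    (J : List (Fin n)) : ℂ :=
  ∑' I : List (Fin n), (chooseCount I J : ℂ) * a I * diffProd p q I J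

lemma chooseCount_nil_right {n : ℕ} (I : List (Fin n)) : chooseCount I [] = 1 := by
  unfold chooseCount
  have h : {α : Fin ([] : List (Fin n)).length → Fin I.length |
      StrictMono α ∧ ∀ k, ([] : List (Fin n)).get k = I.get (α k)} = Set.univ := by
    ext α
    simp only [Set.mem_setOf_eq, Set.mem_univ, iff_true]
    constructor
    · intro a b hab; exact absurd a.2 (by simp)
    · intro k; exact absurd k.2 (by simp)
  rw [h, Set.ncard_univ, Nat.card_eq_fintype_card, Fintype.card_eq_one_iff]
  refine ⟨fun k => absurd k.2 (by simp), fun f => funext fun k => absurd k.2 (by simp)⟩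

lemma chooseCount_nil_left {n : ℕ} (y : Fin n) (J : List (Fin n)) :
    chooseCount [] (y :: J) = 0 := by
  unfold chooseCount
  have h : {α : Fin (y :: J).length → Fin ([] : List (Fin n)).length |
      StrictMono α ∧ ∀ k, (y :: J).get k = ([] : List (Fin n)).get (α k)} = ∅ := by
    ext α
    simp only [Set.mem_setOf_eq, Set.mem_empty_iff_false, iff_false]
    intro _
    exact absurd (α ⟨0, by simp⟩).2 (by simp)
  rw [h, Set.ncard_empty]

lemma chooseCount_cons_cons {n : ℕ} (x y : Fin n) (I J : List (Fin n)) :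
    chooseCount (x :: I) (y :: J) =
      chooseCount I (y :: J) + if x = y then chooseCount I J else 0 := by
  classical
  have key : chooseCount (x :: I) (y :: J) =
      Set.ncard {α : Fin (J.length + 1) → Fin (I.length + 1) |
        StrictMono α ∧ ∀ k, (y :: J).get k = (x :: I).get (α k)} := rfl
  set P : (Fin (J.length + 1) → Fin (I.length + 1)) → Prop :=
    fun α => StrictMono α ∧ ∀ k, (y :: J).get k = (x :: I).get (α k) with hP
  set S₁ : Set (Fin (J.length + 1) → Fin (I.length + 1)) := {α | P α ∧ α 0 ≠ 0} with hS1
  set S₀ : Set (Fin (J.length + 1) → Fin (I.length + 1)) := {α | P α ∧ α 0 = 0} with hS0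
  have hsplit : {α : Fin (J.length + 1) → Fin (I.length + 1) | P α} = S₁ ∪ S₀ := by
    ext α
    simp only [Set.mem_setOf_eq, Set.mem_union, hS1, hS0, Set.mem_setOf_eq]
    tauto
  have hdisj : Disjoint S₁ S₀ := by
    rw [Set.disjoint_iff_inter_eq_empty]; ext α
    simp only [Set.mem_inter_iff, hS1, hS0, Set.mem_setOf_eq, Set.mem_empty_iff_false, iff_false]
    tauto
  have hgetsucc : ∀ (j : Fin I.length), (x :: I).get j.succ = I.get j := by
    intro j; simp
  have h₁ : S₁ = (fun β : Fin (J.length + 1) → Fin I.length => Fin.succ ∘ β) ''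
      {β : Fin (y :: J).length → Fin I.length |
        StrictMono β ∧ ∀ k, (y :: J).get k = I.get (β k)} := by
    ext α
    constructor
    · rintro ⟨⟨hmono, hget⟩, h0⟩
      have hne : ∀ k, α k ≠ 0 := by
        intro k hk
        have h := hmono.monotone (Fin.zero_le k)
        rw [hk] at h
        exact h0 (Fin.le_zero_iff.mp h)
      refine ⟨fun k => (α k).pred (hne k), ⟨?_, ?_⟩, ?_⟩
      · intro c d hcd
        have := hmono hcd
        simp only [Fin.pred_lt_pred_iff]
        exact this
      · intro k
        have h := hget k
        rw [show α k = ((α k).pred (hne k)).succ from (Fin.succ_pred _ _).symm,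
          hgetsucc] at h
        exact h
      · funext k; simp
    · rintro ⟨β, ⟨hmono, hget⟩, rfl⟩
      refine ⟨⟨fun c d hcd => by simpa using hmono hcd, fun k => ?_⟩,
        by simp [Fin.succ_ne_zero]⟩
      rw [hget k]
      exact (hgetsucc (β k)).symm
  have h₀T : x = y → S₀ = (fun β : Fin J.length → Fin I.length =>
      Fin.cons 0 (Fin.succ ∘ β)) ''
      {β : Fin J.length → Fin I.length | StrictMono β ∧ ∀ k, J.get k = I.get (β k)} := by
    intro hxy
    ext α
    constructor
    · rintro ⟨⟨hmono, hget⟩, h0⟩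
      have hne : ∀ k : Fin J.length, α k.succ ≠ 0 := by
        intro k hk
        have : α 0 < α k.succ := hmono (Fin.succ_pos k)
        rw [hk, h0] at this
        exact lt_irrefl _ this
      refine ⟨fun k => (α k.succ).pred (hne k), ⟨?_, ?_⟩, ?_⟩
      · intro c d hcd
        have := hmono (Fin.succ_lt_succ_iff.mpr hcd)
        simp only [Fin.pred_lt_pred_iff]
        exact this
      · intro k
        have h := hget k.succ
        rw [show α k.succ = ((α k.succ).pred (hne k)).succ from (Fin.succ_pred _ _).symm,
          hgetsucc] at h
        simpa using h
      · funext k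
        rcases Fin.eq_zero_or_eq_succ k with rfl | ⟨j, rfl⟩
        · simp [h0]
        · simp
    · rintro ⟨β, ⟨hmono, hget⟩, rfl⟩
      refine ⟨⟨?_, ?_⟩, by simp⟩
      · intro c d hcd
        rcases Fin.eq_zero_or_eq_succ c with rfl | ⟨i, rfl⟩ <;>
          rcases Fin.eq_zero_or_eq_succ d with rfl | ⟨j, rfl⟩
        · exact absurd hcd (lt_irrefl _)
        · simp only [Fin.cons_zero, Fin.cons_succ, Function.comp_apply]
          exact Fin.succ_pos _
        · exact absurd hcd (Fin.not_lt_zero _)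
        · simp only [Fin.cons_succ, Function.comp_apply, Fin.succ_lt_succ_iff]
          exact hmono (Fin.succ_lt_succ_iff.mp hcd)
      · intro k
        rcases Fin.eq_zero_or_eq_succ k with rfl | ⟨j, rfl⟩
        · simp [hxy]
        · simp only [Fin.cons_succ, Function.comp_apply]
          rw [show (y :: J).get j.succ = J.get j by simp, hget j]
          exact (hgetsucc (β j)).symm
  have h₀E : x ≠ y → S₀ = ∅ := by
    intro hxy
    ext α
    simp only [hS0, Set.mem_setOf_eq, Set.mem_empty_iff_false, iff_false]
    rintro ⟨⟨hmono, hget⟩, h0⟩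
    have h := hget (0 : Fin (J.length + 1))
    rw [h0] at h
    simp at h
    exact hxy h.symm
  have hinj₁ : Function.Injective
      (fun β : Fin (J.length + 1) → Fin I.length => Fin.succ ∘ β) :=
    fun β β' h => funext fun k => Fin.succ_injective _ (congrFun h k)
  have hinj₀ : Function.Injective
      (fun β : Fin J.length → Fin I.length =>
        (Fin.cons 0 (Fin.succ ∘ β) : Fin (J.length + 1) → Fin (I.length + 1))) := by
    intro β β' h
    funext k
    have h2 := congrFun h k.succ
    simp only [Fin.cons_succ, Function.comp_apply] at h2
    exact Fin.succ_injective _ h2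
  rw [key]
  have hPeq : {α : Fin (J.length + 1) → Fin (I.length + 1) |
      StrictMono α ∧ ∀ k, (y :: J).get k = (x :: I).get (α k)} =
      {α : Fin (J.length + 1) → Fin (I.length + 1) | P α} := rfl
  rw [hPeq, hsplit, Set.ncard_union_eq hdisj (Set.toFinite _) (Set.toFinite _)]
  have e₁ : S₁.ncard = chooseCount I (y :: J) := by
    rw [h₁, Set.ncard_image_of_injective _ hinj₁]
    rfl
  have e₀ : S₀.ncard = if x = y then chooseCount I J else 0 := by
    by_cases hxy : x = y
    · rw [if_pos hxy, h₀T hxy, Set.ncard_image_of_injective _ hinj₀]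
      rfl
    · rw [if_neg hxy, h₀E hxy, Set.ncard_empty]
  rw [e₁, e₀]

lemma chooseCount_append {n : ℕ} (I I' J : List (Fin n)) :
    chooseCount (I ++ I') J =
      ∑ i ∈ Finset.range (J.length + 1),
        chooseCount I (J.take i) * chooseCount I' (J.drop i) := by
  induction I generalizing J with
  | nil =>
    cases J with
    | nil => simp [chooseCount_nil_right]
    | cons y J'' =>
      rw [List.nil_append, Finset.sum_range_succ']
      simp [chooseCount_nil_left, chooseCount_nil_right]
  | cons x I2 ih =>
    cases J with
    | nil => simp [chooseCount_nil_right]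
    | cons y J'' =>
      rw [List.cons_append, chooseCount_cons_cons, ih (y :: J''), ih J'']
      conv_rhs => rw [Finset.sum_range_succ']
      conv_lhs => rw [Finset.sum_range_succ']
      simp only [List.take_succ_cons, List.drop_succ_cons, List.take_zero, List.drop_zero,
        chooseCount_cons_cons, chooseCount_nil_right, one_mul, add_mul, List.length_cons]
      rw [Finset.sum_add_distrib]
      by_cases hxy : x = y
      · simp only [if_pos hxy, Finset.mul_sum]
        ring
      · simp only [if_neg hxy, zero_mul, Finset.sum_const_zero, add_zero]
        try ring

lemma multiset_le_of_chooseCount_ne_zero {n : ℕ} {I J : List (Fin n)}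
    (h : chooseCount I J ≠ 0) : (J : Multiset (Fin n)) ≤ (I : Multiset (Fin n)) := by
  induction I generalizing J with
  | nil =>
    cases J with
    | nil => simp
    | cons y J'' => exact absurd (chooseCount_nil_left y J'') h
  | cons x I2 ih =>
    cases J with
    | nil => simp
    | cons y J'' =>
      rw [chooseCount_cons_cons] at h
      have : chooseCount I2 (y :: J'') ≠ 0 ∨ (if x = y then chooseCount I2 J'' else 0) ≠ 0 := by
        by_contra hc
        push_neg at hc
        rw [hc.1, hc.2] at h
        exact h rfl
      rcases this with h1 | h1
      · refine le_trans (ih h1) ?_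
        rw [← Multiset.cons_coe]
        exact Multiset.le_cons_self _ _
      · have hxy : x = y := by
          by_contra hxy
          rw [if_neg hxy] at h1
          exact h1 rfl
        rw [if_pos hxy] at h1
        rw [← Multiset.cons_coe, ← Multiset.cons_coe, hxy]
        exact Multiset.cons_le_cons _ (ih h1)

lemma chooseCount_le_choose {n : ℕ} (I J : List (Fin n)) :
    chooseCount I J ≤ Nat.choose I.length J.length := by
  induction I generalizing J with
  | nil =>
    cases J with
    | nil => simp [chooseCount_nil_right]
    | cons y J'' => simp [chooseCount_nil_left]
  | cons x I2 ih =>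
    cases J with
    | nil => simp [chooseCount_nil_right]
    | cons y J'' =>
      rw [chooseCount_cons_cons]
      have h1 := ih (y :: J'')
      have h2 : (if x = y then chooseCount I2 J'' else 0) ≤ Nat.choose I2.length J''.length := by
        split
        · exact ih J''
        · exact Nat.zero_le _
      calc chooseCount I2 (y :: J'') + (if x = y then chooseCount I2 J'' else 0)
          ≤ Nat.choose I2.length (J''.length + 1) + Nat.choose I2.length J''.length := by
            simpa using Nat.add_le_add h1 h2
        _ = Nat.choose (I2.length + 1) (J''.length + 1) := by rw [Nat.choose_succ_succ']; ring
        _ = Nat.choose (x :: I2).length (y :: J'').length := by simp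

lemma abs_wprod {n : ℕ} (w : Fin n → ℂ) (I : List (Fin n)) :
    ‖wprod w I‖ = (I.map fun i => ‖w i‖).prod := by
  rw [wprod, List.norm_prod, List.map_map]
  rfl

lemma summable_aux {n : ℕ} (a : List (Fin n) → ℂ) (p : Fin n → ℂ) (r : Fin n → ℝ)
    (hr : ∀ i, 0 < r i)
    (hconv : ∀ z : Fin n → ℂ, (∀ i, ‖z i - p i‖ < r i) →
      Summable (fun I : List (Fin n) =>
        ‖a I‖ * ‖wprod (fun i => z i - p i) I‖))
    (q : Fin n → ℂ) (hq : ∀ i, ‖q i - p i‖ < r i) (J : List (Fin n)) :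
    Summable (fun I : List (Fin n) =>
      (chooseCount I J : ℝ) * ‖a I‖ * ‖diffProd p q I J‖) := by
  classical
  set ρ : Fin n → ℝ := fun i => (‖q i - p i‖ + r i) / 2 with hρdef
  set ρ' : Fin n → ℝ := fun i => (ρ i + r i) / 2 with hρ'def
  have h0ρ : ∀ i, 0 < ρ i := fun i => by
    have := norm_nonneg (q i - p i); have := hr i; simp only [hρdef]; linarith
  have hqρ : ∀ i, ‖q i - p i‖ ≤ ρ i := fun i => by
    have := hq i; simp only [hρdef]; linarith
  have hρρ' : ∀ i, ρ i < ρ' i := fun i => by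
    have := hq i; simp only [hρdef, hρ'def]; linarith
  have h0ρ' : ∀ i, 0 < ρ' i := fun i => lt_trans (h0ρ i) (hρρ' i)
  have hρ'r : ∀ i, ρ' i < r i := fun i => by
    have := hq i; simp only [hρdef, hρ'def]; linarith
  -- geometric ratio
  obtain ⟨Θ, hΘ0, hΘ1, hΘ⟩ : ∃ Θ : ℝ, 0 < Θ ∧ Θ < 1 ∧ ∀ i, ρ i ≤ Θ * ρ' i := by
    rcases isEmpty_or_nonempty (Fin n) with he | he
    · exact ⟨1/2, by norm_num, by norm_num, fun i => he.elim i⟩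
    · refine ⟨max (1/2) (Finset.univ.sup' (Finset.univ_nonempty) fun i => ρ i / ρ' i),
        lt_max_of_lt_left (by norm_num), ?_, ?_⟩
      · apply max_lt (by norm_num)
        rw [Finset.sup'_lt_iff]
        intro i _
        exact (div_lt_one (h0ρ' i)).mpr (hρρ' i)
      · intro i
        have h1 : ρ i / ρ' i ≤ Finset.univ.sup' Finset.univ_nonempty fun i => ρ i / ρ' i :=
          Finset.le_sup' (fun i => ρ i / ρ' i) (Finset.mem_univ i)
        have h2 := (div_le_iff₀ (h0ρ' i)).mp h1
        calc ρ i ≤ (Finset.univ.sup' Finset.univ_nonempty fun i => ρ i / ρ' i) * ρ' i := h2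
          _ ≤ _ := by
            apply mul_le_mul_of_nonneg_right (le_max_right _ _) (h0ρ' i).le
  have hsumgeo : Summable (fun m : ℕ => (m:ℝ)^J.length * Θ^m) :=
    summable_pow_mul_geometric_of_norm_lt_one J.length
      (by rw [Real.norm_eq_abs, abs_of_pos hΘ0]; exact hΘ1)
  set C : ℝ := ∑' m : ℕ, (m:ℝ)^J.length * Θ^m with hCdef
  have hC : ∀ m : ℕ, (m:ℝ)^J.length * Θ^m ≤ C := fun m =>
    hsumgeo.le_tsum m (fun j _ => by positivity)
  set cJ : ℝ := (J.map ρ').prod with hcJdef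
  have hcJ : 0 < cJ := List.prod_pos (by
    intro x hx
    rcases List.mem_map.mp hx with ⟨i, _, rfl⟩
    exact h0ρ' i)
  -- the dominating summable function
  have hz : ∀ i, ‖(fun i => p i + (ρ' i : ℂ)) i - p i‖ < r i := by
    intro i
    simp only [add_sub_cancel_left, Complex.norm_real, Real.norm_eq_abs, abs_of_pos (h0ρ' i)]
    exact hρ'r i
  have hg0 := hconv (fun i => p i + (ρ' i : ℂ)) hz
  have habs : ∀ I : List (Fin n),
      ‖wprod (fun i => (p i + (ρ' i : ℂ)) - p i) I‖ = (I.map ρ').prod := by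
    intro I
    rw [abs_wprod]
    congr 1
    apply List.map_congr_left
    intro i _
    simp [abs_of_pos (h0ρ' i)]
  have hg : Summable (fun I : List (Fin n) =>
      (C / (Θ ^ J.length * cJ)) * (‖a I‖ * (I.map ρ').prod)) := by
    apply Summable.mul_left
    refine hg0.congr fun I => ?_
    rw [habs I]
  have hρ'prod_nonneg : ∀ I : List (Fin n), 0 ≤ (I.map ρ').prod := by
    intro I
    apply List.prod_nonneg
    intro x hx
    rcases List.mem_map.mp hx with ⟨i, _, rfl⟩
    exact (h0ρ' i).le
  apply Summable.of_nonneg_of_le ?_ ?_ hg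
  · intro I; positivity
  · intro I
    by_cases hc : chooseCount I J = 0
    · rw [hc]
      simp only [Nat.cast_zero, zero_mul]
      have hC0 : 0 ≤ C := le_trans (by positivity : (0:ℝ) ≤ (0:ℝ)^J.length * Θ^0) (by
        simpa using hC 0)
      exact mul_nonneg (div_nonneg hC0 (by positivity))
        (mul_nonneg (norm_nonneg _) (hρ'prod_nonneg I))
    · have hJI := multiset_le_of_chooseCount_ne_zero hc
      have hlen : J.length ≤ I.length := by
        have := Multiset.card_le_card hJI; simpa using this
      set M : Multiset (Fin n) := (I : Multiset (Fin n)) - (J : Multiset (Fin n)) with hM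
      have hMadd : M + (J : Multiset (Fin n)) = (I : Multiset (Fin n)) :=
        tsub_add_cancel_of_le hJI
      have hMcard : Multiset.card M = I.length - J.length := by
        rw [hM, Multiset.card_sub hJI]; simp
      -- bound on |diffProd|
      have hd1 : ‖diffProd p q I J‖ =
          (M.map fun i => ‖q i - p i‖).prod := by
        rw [diffProd, show ∀ s : Multiset ℂ, ‖s.prod‖ = (s.map norm).prod from
          map_multiset_prod (normHom.toMonoidHom : ℂ →* ℝ), Multiset.map_map]
        rfl
      have hd2 : (M.map fun i => ‖q i - p i‖).prod ≤
          (M.map fun i => Θ * ρ' i).prod := by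
        apply Multiset.prod_map_le_prod_map₀
        · intro i _; exact norm_nonneg _
        · intro i _; exact le_trans (hqρ i) (hΘ i)
      have hd3 : (M.map fun i => Θ * ρ' i).prod = Θ ^ (I.length - J.length) * (M.map ρ').prod := by
        rw [Multiset.prod_map_mul]
        congr 1
        rw [Multiset.map_const', Multiset.prod_replicate, hMcard]
      have hd4 : (M.map ρ').prod * cJ = (I.map ρ').prod := by
        rw [hcJdef, ← Multiset.prod_coe, ← Multiset.prod_coe, ← Multiset.map_coe,
          ← Multiset.map_coe, ← Multiset.prod_add, ← Multiset.map_add, hMadd]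
      have hMprod_nonneg : 0 ≤ (M.map ρ').prod := by
        apply Multiset.prod_nonneg
        intro x hx
        rcases Multiset.mem_map.mp hx with ⟨i, _, rfl⟩
        exact (h0ρ' i).le
      have hcc : (chooseCount I J : ℝ) ≤ (I.length : ℝ) ^ J.length := by
        calc (chooseCount I J : ℝ) ≤ (Nat.choose I.length J.length : ℝ) := by
              exact_mod_cast chooseCount_le_choose I J
          _ ≤ (I.length : ℝ) ^ J.length := by
              exact_mod_cast Nat.choose_le_pow I.length J.length
      have hpow : Θ ^ (I.length - J.length) = Θ ^ I.length / Θ ^ J.length :=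
        pow_sub₀ Θ hΘ0.ne' hlen
      calc (chooseCount I J : ℝ) * ‖a I‖ * ‖diffProd p q I J‖
          ≤ (I.length : ℝ) ^ J.length * ‖a I‖ *
            (Θ ^ (I.length - J.length) * (M.map ρ').prod) := by
            apply mul_le_mul
            · exact mul_le_mul_of_nonneg_right hcc (norm_nonneg _)
            · rw [hd1]; exact le_trans hd2 (le_of_eq hd3)
            · exact norm_nonneg _
            · positivity
        _ = ((I.length : ℝ) ^ J.length * Θ ^ I.length) *
            (‖a I‖ * ((M.map ρ').prod / Θ ^ J.length)) := by
            rw [hpow]; ring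
        _ ≤ C * (‖a I‖ * ((M.map ρ').prod / Θ ^ J.length)) := by
            apply mul_le_mul_of_nonneg_right (hC I.length)
            positivity
        _ = (C / (Θ ^ J.length * cJ)) * (‖a I‖ * ((M.map ρ').prod * cJ)) := by
            field_simp
        _ = (C / (Θ ^ J.length * cJ)) * (‖a I‖ * (I.map ρ').prod) := by
            rw [hd4]

lemma diffProd_append {n : ℕ} (p q : Fin n → ℂ) {I I' J₁ J₂ : List (Fin n)}
    (h₁ : (J₁ : Multiset (Fin n)) ≤ (I : Multiset (Fin n)))
    (h₂ : (J₂ : Multiset (Fin n)) ≤ (I' : Multiset (Fin n))) :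
    diffProd p q (I ++ I') (J₁ ++ J₂) = diffProd p q I J₁ * diffProd p q I' J₂ := by
  unfold diffProd
  have hd : ((I ++ I' : List (Fin n)) : Multiset (Fin n)) -
      ((J₁ ++ J₂ : List (Fin n)) : Multiset (Fin n)) =
      ((I : Multiset (Fin n)) - J₁) + ((I' : Multiset (Fin n)) - J₂) := by
    rw [← Multiset.coe_add, ← Multiset.coe_add]
    exact (tsub_add_tsub_comm h₁ h₂).symm
  rw [hd, Multiset.map_add, Multiset.prod_add]

def splitEquiv (n : ℕ) : (List (Fin n) × List (Fin n)) ≃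
    (Σ K : List (Fin n), Fin (K.length + 1)) where
  toFun z := ⟨z.1 ++ z.2, ⟨z.1.length, by simp [Nat.lt_succ_iff]⟩⟩
  invFun σ := (σ.1.take σ.2, σ.1.drop σ.2)
  left_inv z := by simp
  right_inv σ := by
    rcases σ with ⟨K, j⟩
    have h1 : K.take ↑j ++ K.drop ↑j = K := List.take_append_drop _ _
    have h2 : (K.take ↑j).length = ↑j := by
      simp [List.length_take]
      exact Nat.le_of_lt_succ j.2
    refine Sigma.ext h1 ?_
    rw [Fin.heq_ext_iff (by simp [h1])]
    simpa using h2

theorem reexpansion_multiplicative {n : ℕ}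
    (a b : List (Fin n) → ℂ) (p : Fin n → ℂ) (r : Fin n → ℝ)
    (hr : ∀ i, 0 < r i)
    (hconv : ∀ z : Fin n → ℂ, (∀ i, ‖z i - p i‖ < r i) →
      Summable (fun I : List (Fin n) =>
        ‖a I‖ * ‖wprod (fun i => z i - p i) I‖))
    (hconv' : ∀ z : Fin n → ℂ, (∀ i, ‖z i - p i‖ < r i) →
      Summable (fun I : List (Fin n) =>
        ‖b I‖ * ‖wprod (fun i => z i - p i) I‖))
    (q : Fin n → ℂ) (hq : ∀ i, ‖q i - p i‖ < r i) :
    ∀ J : List (Fin n),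
      reCoeff (ncMul a b) p q J =
        ncMul (reCoeff a p q) (reCoeff b p q) J := by
  intro J
  classical
  set f : ℕ → List (Fin n) → ℂ := fun i I =>
    (chooseCount I (J.take i) : ℂ) * a I * diffProd p q I (J.take i) with hf
  set g : ℕ → List (Fin n) → ℂ := fun i I =>
    (chooseCount I (J.drop i) : ℂ) * b I * diffProd p q I (J.drop i) with hg
  have hfa : ∀ i, Summable fun I => ‖f i I‖ := by
    intro i
    refine (summable_aux a p r hr hconv q hq (J.take i)).congr fun I => ?_
    simp [hf, map_mul]
  have hgb : ∀ i, Summable fun I => ‖g i I‖ := by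
    intro i
    refine (summable_aux b p r hr hconv' q hq (J.drop i)).congr fun I => ?_
    simp [hg, map_mul]
  have hprod : ∀ i, Summable fun z : List (Fin n) × List (Fin n) =>
      ‖f i z.1 * g i z.2‖ := fun i => (hfa i).mul_norm (hgb i)
  -- pointwise identity
  have hpt : ∀ I I' : List (Fin n),
      (chooseCount (I ++ I') J : ℂ) * (a I * b I') * diffProd p q (I ++ I') J =
      ∑ i ∈ Finset.range (J.length + 1), f i I * g i I' := by
    intro I I'
    rw [chooseCount_append, Nat.cast_sum, Finset.sum_mul, Finset.sum_mul]
    refine Finset.sum_congr rfl fun i _ => ?_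
    by_cases h1 : chooseCount I (J.take i) = 0
    · simp [hf, h1]
    by_cases h2 : chooseCount I' (J.drop i) = 0
    · simp [hg, h2]
    have hd := diffProd_append p q (multiset_le_of_chooseCount_ne_zero h1)
      (multiset_le_of_chooseCount_ne_zero h2)
    rw [List.take_append_drop] at hd
    rw [hd]
    simp only [hf, hg]
    push_cast
    ring
  set F : List (Fin n) × List (Fin n) → ℂ := fun z =>
    (chooseCount (z.1 ++ z.2) J : ℂ) * (a z.1 * b z.2) * diffProd p q (z.1 ++ z.2) J with hF
  have hFsummable : Summable F :=
    (summable_sum (fun i _ => (hprod i).of_norm)).congr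
      (fun z => (hpt z.1 z.2).symm)
  set h : (Σ K : List (Fin n), Fin (K.length + 1)) → ℂ := fun σ =>
    (chooseCount σ.1 J : ℂ) * (a (σ.1.take ↑σ.2) * b (σ.1.drop ↑σ.2)) *
      diffProd p q σ.1 J with hh
  have hcomp : ∀ z : List (Fin n) × List (Fin n), h (splitEquiv n z) = F z := by
    intro z
    simp only [hh, hF, splitEquiv, Equiv.coe_fn_mk]
    rw [List.take_left, List.drop_left]
  have hhsummable : Summable h :=
    (splitEquiv n).summable_iff.mp (hFsummable.congr fun z => (hcomp z).symm)
  calc reCoeff (ncMul a b) p q J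
      = ∑' K : List (Fin n), (chooseCount K J : ℂ) * ncMul a b K * diffProd p q K J := rfl
    _ = ∑' K : List (Fin n), ∑' j : Fin (K.length + 1), h ⟨K, j⟩ := by
        refine tsum_congr fun K => ?_
        rw [tsum_fintype]
        simp only [ncMul, Finset.mul_sum, Finset.sum_mul]
        exact (Fin.sum_univ_eq_sum_range (fun i => (chooseCount K J : ℂ) *
          (a (K.take i) * b (K.drop i)) * diffProd p q K J) (K.length + 1)).symm
    _ = ∑' σ, h σ := (Summable.tsum_sigma' (fun K => Summable.of_finite) hhsummable).symm
    _ = ∑' z : List (Fin n) × List (Fin n), F z := by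
        rw [← (splitEquiv n).tsum_eq h]
        exact tsum_congr hcomp
    _ = ∑' z : List (Fin n) × List (Fin n),
          ∑ i ∈ Finset.range (J.length + 1), f i z.1 * g i z.2 :=
        tsum_congr fun z => hpt z.1 z.2
    _ = ∑ i ∈ Finset.range (J.length + 1), ∑' z : List (Fin n) × List (Fin n),
          f i z.1 * g i z.2 := Summable.tsum_finsetSum (fun i _ => (hprod i).of_norm)
    _ = ∑ i ∈ Finset.range (J.length + 1), (∑' I, f i I) * (∑' I', g i I') := by
        refine Finset.sum_congr rfl fun i _ => ?_
        exact (tsum_mul_tsum_of_summable_norm (hfa i) (hgb i)).symm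
    _ = ncMul (reCoeff a p q) (reCoeff b p q) J := rfl
end

section
/- The re-expansion maps are compatible with abelization and evaluation: if f = Σ_I a_I (x−p)^I converges on P(p,r) and q ∈ P(p,r), then the abelization of f_q := Σ_J a_J(q)(x−q)^J converges on any polydisk P(q,r') ⊆ P(p,r) and represents there the same holomorphic function as the abelization of f; in particular (f_q)(z) = f(z) for z ∈ P(q,r'). -/
namespace ReexpAux

open Finset

variable {n : ℕ}

/-- Generic word product. -/
def pprod {R : Type*} [CommMonoid R] (w : Fin n → R) (I : List (Fin n)) : R :=
  (I.map w).prod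

/-- Generic multiset-difference product. -/
def mdiff {R : Type*} [CommMonoid R] (u : Fin n → R) (I J : List (Fin n)) : R :=
  (((I : Multiset (Fin n)) - (J : Multiset (Fin n))).map u).prod

theorem pprod_eq_prod {R : Type*} [CommMonoid R] (w : Fin n → R) (I : List (Fin n)) :
    pprod w I = ∏ k : Fin I.length, w (I.get k) := by
  conv_lhs => rw [pprod, ← List.ofFn_get I, List.map_ofFn, List.prod_ofFn]
  rfl

/-- The sorted sub-word of `I` determined by a set of positions. -/
def sw (I : List (Fin n)) (S : Finset (Fin I.length)) : List (Fin n) :=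
  (S.sort (· ≤ ·)).map I.get

theorem length_sw (I : List (Fin n)) (S : Finset (Fin I.length)) :
    (sw I S).length = S.card := by
  simp [sw]

theorem coe_sw (I : List (Fin n)) (S : Finset (Fin I.length)) :
    ((sw I S : List (Fin n)) : Multiset (Fin n)) = S.val.map I.get := by
  rw [sw, ← Multiset.map_coe, Finset.sort_eq]

theorem coe_I (I : List (Fin n)) :
    (I : Multiset (Fin n)) = (univ : Finset (Fin I.length)).val.map I.get := by
  rw [Fin.univ_val_map, List.ofFn_get]

theorem get_sw (I : List (Fin n)) (S : Finset (Fin I.length)) {k : ℕ}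
    (h : S.card = k) (i : Fin k) (hi : i.1 < (sw I S).length) :
    (sw I S).get ⟨i.1, hi⟩ = I.get (S.orderEmbOfFin h i) := by
  simp [sw, Finset.orderEmbOfFin_apply]

theorem pprod_sw {R : Type*} [CommMonoid R] (v : Fin n → R) (I : List (Fin n))
    (S : Finset (Fin I.length)) :
    pprod v (sw I S) = ∏ k ∈ S, v (I.get k) := by
  rw [Finset.prod_eq_multiset_prod, pprod, ← Multiset.prod_coe,
    ← Multiset.map_coe, coe_sw, Multiset.map_map]
  rfl

theorem univ_val_eq (I : List (Fin n)) (S : Finset (Fin I.length)) :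
    (univ : Finset (Fin I.length)).val = S.val + (univ \ S).val := by
  rw [Finset.sdiff_val]
  exact (add_tsub_cancel_of_le (Finset.val_le_iff.mpr (subset_univ S))).symm

theorem mdiff_sw {R : Type*} [CommMonoid R] (u : Fin n → R) (I : List (Fin n))
    (S : Finset (Fin I.length)) :
    mdiff u I (sw I S) = ∏ k ∈ univ \ S, u (I.get k) := by
  have hdiff : (I : Multiset (Fin n)) - ((sw I S : List (Fin n)) : Multiset (Fin n))
      = (univ \ S).val.map I.get := by
    rw [coe_sw, coe_I I, univ_val_eq I S, Multiset.map_add, add_tsub_cancel_left]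
  rw [mdiff, hdiff, Multiset.map_map, Finset.prod_eq_multiset_prod]
  rfl

theorem sw_sublist (I : List (Fin n)) (S : Finset (Fin I.length)) :
    List.Sublist (sw I S) I := by
  rw [List.sublist_iff_exists_fin_orderEmbedding_get_eq]
  have h : S.card = (sw I S).length := (length_sw I S).symm
  refine ⟨S.orderEmbOfFin h, fun k => ?_⟩
  exact get_sw I S h k k.2

theorem chooseCount_eq_card_filter (I J : List (Fin n)) :
    chooseCount I J =
      ((univ : Finset (Finset (Fin I.length))).filter fun S => sw I S = J).card := by
  classical
  rw [chooseCount]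
  have hset : {α : Fin J.length → Fin I.length |
      StrictMono α ∧ ∀ k, J.get k = I.get (α k)} =
      ↑((univ : Finset (Fin J.length → Fin I.length)).filter
        fun α => StrictMono α ∧ ∀ k, J.get k = I.get (α k)) := by
    ext α; simp
  rw [hset, Set.ncard_coe_finset]
  refine Finset.card_bij (fun α _ => univ.image α) ?_ ?_ ?_
  · intro α hα
    simp only [mem_filter, mem_univ, true_and] at hα ⊢
    obtain ⟨hmono, hcomp⟩ := hα
    have hcard : (univ.image α).card = J.length := by
      rw [Finset.card_image_of_injective _ hmono.injective, card_univ, Fintype.card_fin]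
    have hα_eq : α = ⇑((univ.image α).orderEmbOfFin hcard) :=
      Finset.orderEmbOfFin_unique hcard
        (fun x => Finset.mem_image_of_mem α (mem_univ x)) hmono
    apply List.ext_get
    · rw [length_sw, hcard]
    intro m h1 h2
    have h2' : m < J.length := h2
    rw [show (⟨m, h1⟩ : Fin (sw I (univ.image α)).length) =
        ⟨(⟨m, h2'⟩ : Fin J.length).1, h1⟩ from rfl,
      get_sw I (univ.image α) hcard ⟨m, h2'⟩ h1, ← hα_eq]
    exact (hcomp ⟨m, h2'⟩).symm
  · intro α hα β hβ himg
    simp only [mem_filter, mem_univ, true_and] at hα hβ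
    have hcard : (univ.image α).card = J.length := by
      rw [Finset.card_image_of_injective _ hα.1.injective, card_univ, Fintype.card_fin]
    have h1 : α = ⇑((univ.image α).orderEmbOfFin hcard) :=
      Finset.orderEmbOfFin_unique hcard
        (fun x => Finset.mem_image_of_mem α (mem_univ x)) hα.1
    have himg' : Finset.image α univ = Finset.image β univ := himg
    have h2 : β = ⇑((univ.image α).orderEmbOfFin hcard) :=
      Finset.orderEmbOfFin_unique hcard
        (fun x => himg'.symm ▸ Finset.mem_image_of_mem β (mem_univ x)) hβ.1
    exact h1.trans h2.symm
  · intro S hS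
    simp only [mem_filter, mem_univ, true_and] at hS
    have h : S.card = J.length := by rw [← hS, length_sw]
    refine ⟨⇑(S.orderEmbOfFin h), ?_, ?_⟩
    · simp only [mem_filter, mem_univ, true_and]
      refine ⟨(S.orderEmbOfFin h).strictMono, fun k => ?_⟩
      have hk : k.1 < (sw I S).length := by rw [length_sw, h]; exact k.2
      have h2 := List.get_of_eq hS ⟨k.1, hk⟩
      rw [get_sw I S h k hk] at h2
      rw [← h2]
    · apply Finset.coe_injective
      rw [coe_image, coe_univ, Set.image_univ, Finset.range_orderEmbOfFin]

theorem expansion {R : Type*} [CommSemiring R] (u v : Fin n → R) (I : List (Fin n)) :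
    pprod (fun i => u i + v i) I
      = ∑ J ∈ I.sublists.toFinset,
          (chooseCount I J : R) * mdiff u I J * pprod v J := by
  classical
  rw [pprod_eq_prod]
  have : ∀ k : Fin I.length, u (I.get k) + v (I.get k) = v (I.get k) + u (I.get k) :=
    fun k => add_comm _ _
  rw [Finset.prod_congr rfl (fun k _ => this k),
    Finset.prod_add (fun k => v (I.get k)) (fun k => u (I.get k)) univ,
    Finset.powerset_univ]
  rw [← Finset.sum_fiberwise_of_maps_to
      (g := fun S => sw I S)
      (fun S _ => List.mem_toFinset.mpr (List.mem_sublists.mpr (sw_sublist I S)))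
      (fun S => (∏ k ∈ S, v (I.get k)) * ∏ k ∈ univ \ S, u (I.get k))]
  refine Finset.sum_congr rfl fun J hJ => ?_
  have : ∀ S ∈ univ.filter (fun S => sw I S = J),
      (∏ k ∈ S, v (I.get k)) * ∏ k ∈ univ \ S, u (I.get k)
        = pprod v J * mdiff u I J := by
    intro S hS
    simp only [mem_filter, mem_univ, true_and] at hS
    rw [← hS, pprod_sw, mdiff_sw]
  rw [Finset.sum_congr rfl this, Finset.sum_const, ← chooseCount_eq_card_filter,
    nsmul_eq_mul]
  ring

theorem chooseCount_eq_zero {I J : List (Fin n)} (h : ¬ List.Sublist J I) :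
    chooseCount I J = 0 := by
  rw [chooseCount]
  convert Set.ncard_empty (Fin J.length → Fin I.length)
  rw [Set.eq_empty_iff_forall_notMem]
  rintro α ⟨hmono, hcomp⟩
  exact h (List.sublist_iff_exists_fin_orderEmbedding_get_eq.mpr
    ⟨OrderEmbedding.ofStrictMono α hmono, fun k => hcomp k⟩)

theorem hasSum_expansion {R : Type*} [CommSemiring R] [TopologicalSpace R]
    [T2Space R] (u v : Fin n → R) (I : List (Fin n)) :
    HasSum (fun J : List (Fin n) => (chooseCount I J : R) * mdiff u I J * pprod v J)
      (pprod (fun i => u i + v i) I) := by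
  rw [expansion u v I]
  apply hasSum_sum_of_ne_finset_zero
  intro J hJ
  have hz : chooseCount I J = 0 :=
    chooseCount_eq_zero fun h => hJ (List.mem_toFinset.mpr (List.mem_sublists.mpr h))
  simp [hz]

theorem abs_pprod (w : Fin n → ℂ) (I : List (Fin n)) :
    ‖pprod w I‖ = pprod (fun i => ‖w i‖) I := by
  rw [pprod, pprod, show ‖(I.map w).prod‖ = normHom (I.map w).prod from rfl,
    map_list_prod, List.map_map]
  rfl

theorem abs_mdiff (u : Fin n → ℂ) (I J : List (Fin n)) :
    ‖mdiff u I J‖ = mdiff (fun i => ‖u i‖) I J := by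
  rw [mdiff, mdiff, show ‖(((I : Multiset (Fin n)) - (J : Multiset (Fin n))).map u).prod‖
    = normHom (((I : Multiset (Fin n)) - (J : Multiset (Fin n))).map u).prod from rfl,
    map_multiset_prod, Multiset.map_map]
  rfl

theorem pprod_nonneg {w : Fin n → ℝ} (hw : ∀ i, 0 ≤ w i) (I : List (Fin n)) :
    0 ≤ pprod w I := by
  apply List.prod_nonneg
  intro x hx
  obtain ⟨i, _, rfl⟩ := List.mem_map.mp hx
  exact hw i

theorem mdiff_nonneg {u : Fin n → ℝ} (hu : ∀ i, 0 ≤ u i) (I J : List (Fin n)) :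
    0 ≤ mdiff u I J := by
  apply Multiset.prod_nonneg
  intro x hx
  obtain ⟨i, _, rfl⟩ := Multiset.mem_map.mp hx
  exact hu i

end ReexpAux

open ReexpAux

/-- if `f = Σ_I a_I (x−p)^I` converges on `P(p,r)` and
`P(q,r') ⊆ P(p,r)`, then the re-expansion `f_q = Σ_J a_J(q)(x−q)^J` converges
(absolutely) on `P(q,r')` and represents there the same function as `f`:
`(f_q)(z) = f(z)` for all `z ∈ P(q,r')`. -/
theorem reexpansion_represents_same_function {n : ℕ}
    (a : List (Fin n) → ℂ) (p : Fin n → ℂ) (r : Fin n → ℝ)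
    (hr : ∀ i, 0 < r i)
    (hconv : ∀ z : Fin n → ℂ, (∀ i, ‖z i - p i‖ < r i) →
      Summable (fun I : List (Fin n) =>
        ‖a I‖ * ‖wprod (fun i => z i - p i) I‖))
    (q : Fin n → ℂ) (r' : Fin n → ℝ) (hr' : ∀ i, 0 < r' i)
    (hsub : ∀ z : Fin n → ℂ, (∀ i, ‖z i - q i‖ < r' i) →
      ∀ i, ‖z i - p i‖ < r i) :
    ∀ z : Fin n → ℂ, (∀ i, ‖z i - q i‖ < r' i) →
      Summable (fun J : List (Fin n) =>
        ‖reCoeff a p q J‖ *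
          ‖wprod (fun i => z i - q i) J‖) ∧
      (∑' J : List (Fin n), reCoeff a p q J * wprod (fun i => z i - q i) J) =
        ∑' I : List (Fin n), a I * wprod (fun i => z i - p i) I := by
  classical
  intro z hz
  set w : Fin n → ℂ := fun i => z i - q i with hw
  set u : Fin n → ℂ := fun i => q i - p i with hu
  -- the comparison point z'
  set z' : Fin n → ℂ := fun i =>
    q i + (‖w i‖ : ℂ) *
      (if q i = p i then 1 else u i / (‖u i‖ : ℂ)) with hz'def
  have hz'q : ∀ i, ‖z' i - q i‖ = ‖w i‖ := by
    intro i
    have h1 : z' i - q i = (‖w i‖ : ℂ) *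
        (if q i = p i then 1 else u i / (‖u i‖ : ℂ)) := by
      simp only [hz'def]; ring
    rw [h1, norm_mul, Complex.norm_real, Real.norm_eq_abs, abs_of_nonneg (norm_nonneg _)]
    rcases eq_or_ne (q i) (p i) with h | h
    · simp [h]
    · have hune : u i ≠ 0 := sub_ne_zero.mpr h
      have habs0 : ‖u i‖ ≠ 0 := norm_ne_zero_iff.mpr hune
      rw [if_neg h, norm_div, Complex.norm_real, Real.norm_eq_abs,
        abs_of_nonneg (norm_nonneg _), div_self habs0, mul_one]
  have hz'mem : ∀ i, ‖z' i - q i‖ < r' i := fun i => (hz'q i) ▸ hz i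
  have hz'p : ∀ i, ‖z' i - p i‖
      = ‖u i‖ + ‖w i‖ := by
    intro i
    rcases eq_or_ne (q i) (p i) with h | h
    · have h1 : z' i - p i = (‖w i‖ : ℂ) := by
        simp [hz'def, h]
      rw [h1, Complex.norm_real, Real.norm_eq_abs, abs_of_nonneg (norm_nonneg _)]
      have : u i = 0 := by rw [hu]; simp [h]
      rw [this, norm_zero, zero_add]
    · have hune : u i ≠ 0 := sub_ne_zero.mpr h
      have habs0 : (‖u i‖ : ℂ) ≠ 0 :=
        Complex.ofReal_ne_zero.mpr (norm_ne_zero_iff.mpr hune)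
      have h1 : z' i - p i = u i *
          ((‖u i‖ + ‖w i‖ : ℝ) : ℂ) / (‖u i‖ : ℂ) := by
        rw [hz'def]
        simp only [if_neg h]
        have : q i - p i = u i := by rw [hu]
        push_cast
        field_simp
        ring
      rw [h1, norm_div, norm_mul, Complex.norm_real, Complex.norm_real, Real.norm_eq_abs,
        Real.norm_eq_abs,
        abs_of_nonneg (add_nonneg (norm_nonneg _) (norm_nonneg _)),
        abs_of_nonneg (norm_nonneg _)]
      rw [mul_comm, mul_div_assoc, div_self (norm_ne_zero_iff.mpr hune), mul_one]
  -- summability at z'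
  have hsum' := hconv z' (hsub z' hz'mem)
  set uR : Fin n → ℝ := fun i => ‖u i‖ with huR
  set wR : Fin n → ℝ := fun i => ‖w i‖ with hwR
  have key : (fun I => ‖a I‖ * ‖wprod (fun i => z' i - p i) I‖)
      = fun I => ‖a I‖ * pprod (fun i => uR i + wR i) I := by
    funext I
    have h2 : (fun i => ‖z' i - p i‖) = fun i => uR i + wR i :=
      funext hz'p
    rw [show wprod (fun i => z' i - p i) I = pprod (fun i => z' i - p i) I from rfl,
      abs_pprod, h2]
  rw [key] at hsum'
  -- the big double family
  set G : List (Fin n) × List (Fin n) → ℝ := fun IJ =>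
    (chooseCount IJ.1 IJ.2 : ℝ) * ‖a IJ.1‖ * mdiff uR IJ.1 IJ.2 *
      pprod wR IJ.2 with hG
  set F : List (Fin n) × List (Fin n) → ℂ := fun IJ =>
    (chooseCount IJ.1 IJ.2 : ℂ) * a IJ.1 * diffProd p q IJ.1 IJ.2 * wprod w IJ.2
    with hF
  have huR0 : ∀ i, 0 ≤ uR i := fun i => norm_nonneg _
  have hwR0 : ∀ i, 0 ≤ wR i := fun i => norm_nonneg _
  have hG0 : ∀ IJ, 0 ≤ G IJ := by
    intro IJ
    apply mul_nonneg
    apply mul_nonneg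
    apply mul_nonneg
    · exact Nat.cast_nonneg _
    · exact norm_nonneg _
    · exact mdiff_nonneg huR0 _ _
    · exact pprod_nonneg hwR0 _
  have hGrow : ∀ I : List (Fin n),
      HasSum (fun J => G (I, J)) (‖a I‖ * pprod (fun i => uR i + wR i) I) := by
    intro I
    have h0 := (hasSum_expansion uR wR I).mul_left (‖a I‖)
    have heq : (fun J => ‖a I‖ *
        ((chooseCount I J : ℝ) * mdiff uR I J * pprod wR J)) = fun J => G (I, J) := by
      funext J; rw [hG]; ring
    rwa [heq] at h0
  have hGsum : Summable G := by
    apply (summable_prod_of_nonneg hG0).mpr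
    refine ⟨fun I => (hGrow I).summable, ?_⟩
    have h1 : (fun I => ∑' J, G (I, J))
        = fun I => ‖a I‖ * pprod (fun i => uR i + wR i) I :=
      funext fun I => (hGrow I).tsum_eq
    rw [h1]
    exact hsum'
  have habsF : ∀ IJ, ‖F IJ‖ = G IJ := by
    rintro ⟨I, J⟩
    rw [hF, hG]
    simp only [norm_mul, Complex.norm_natCast]
    rw [show diffProd p q I J = mdiff u I J from rfl, abs_mdiff,
      show wprod w J = pprod w J from rfl, abs_pprod]
  have hFnorm : Summable fun IJ => ‖F IJ‖ := by
    refine hGsum.congr fun IJ => ?_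
    rw [← habsF IJ]
  have hFsum : Summable F := Summable.of_norm hFnorm
  -- inner sums over J (fixed I)
  have hinnerJ : ∀ I : List (Fin n),
      HasSum (fun J => F (I, J)) (a I * wprod (fun i => z i - p i) I) := by
    intro I
    have h0 := (hasSum_expansion u w I).mul_left (a I)
    have heq : (fun J => a I * ((chooseCount I J : ℂ) * mdiff u I J * pprod w J))
        = fun J => F (I, J) := by
      funext J
      simp only [hF]
      rw [show diffProd p q I J = mdiff u I J from rfl,
        show wprod w J = pprod w J from rfl]
      ring
    have heq2 : pprod (fun i => u i + w i) I = wprod (fun i => z i - p i) I := by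
      have h3 : (fun i => u i + w i) = fun i => z i - p i := by
        funext i; rw [hu, hw]; ring
      rw [h3]; rfl
    rw [heq, heq2] at h0
    exact h0
  -- inner sums over I (fixed J)
  have hinnerI : ∀ J : List (Fin n),
      (∑' I, F (I, J)) = reCoeff a p q J * wprod w J := by
    intro J
    rw [reCoeff, ← tsum_mul_right]
  -- the equality of the two representations
  have hsumJfix : ∀ J : List (Fin n), Summable fun I => F (I, J) := by
    intro J
    exact hFsum.prod_symm.prod_factor J
  have hE : (∑' J, reCoeff a p q J * wprod w J)
      = ∑' I, a I * wprod (fun i => z i - p i) I := by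
    calc (∑' J, reCoeff a p q J * wprod w J)
        = ∑' J, ∑' I, F (I, J) := tsum_congr fun J => (hinnerI J).symm
      _ = ∑' I, ∑' J, F (I, J) :=
          Summable.tsum_comm' hFsum (fun I => (hinnerJ I).summable) hsumJfix
      _ = ∑' I, a I * wprod (fun i => z i - p i) I :=
          tsum_congr fun I => (hinnerJ I).tsum_eq
  -- summability of the re-expansion, via the nonneg bound
  have hGswap := hGsum.prod_symm
  have hg := (summable_prod_of_nonneg (f := fun JI : List (Fin n) × List (Fin n) =>
    G (JI.2, JI.1)) (fun JI => hG0 _)).mp (by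
      refine hGswap.congr fun JI => rfl)
  refine ⟨?_, hE⟩
  refine Summable.of_nonneg_of_le
    (fun J => mul_nonneg (norm_nonneg _) (norm_nonneg _))
    (fun J => ?_) hg.2
  have hnormsum : Summable fun I => ‖F (I, J)‖ := by
    refine (hg.1 J).congr fun I => ?_
    rw [← habsF (I, J)]
  calc ‖reCoeff a p q J‖ * ‖wprod w J‖
      = ‖reCoeff a p q J * wprod w J‖ := (norm_mul _ _).symm
    _ = ‖∑' I, F (I, J)‖ := by rw [hinnerI J]
    _ ≤ ∑' I, ‖F (I, J)‖ := norm_tsum_le_tsum_norm hnormsum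
    _ = ∑' I, G (I, J) := tsum_congr fun I => by
        rw [habsF (I, J)]
end

section
/- Cocycle property of re-expansion: for points p, q, s with P(q,r') ⊆ P(p,r) and P(s,r'') ⊆ P(q,r'), the re-expansion homomorphisms satisfy α(q,s) ∘ α(p,q) = α(p,s) on convergent noncommutative power series centered at p and converging on P(p,r). -/
/-- The re-expansion map `α(p,q)`: the coefficient of `α(p,q)(f)` at a word `J`
is `a_J(q) = Σ_{I ≥ J} (I choose J) a_I (q−p)^{I−J}`. -/
noncomputable def reExp {n : ℕ} (p q : Fin n → ℂ) (a : List (Fin n) → ℂ) :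
    List (Fin n) → ℂ :=
  fun J => ∑' I : List (Fin n), (chooseCount I J : ℂ) * a I * diffProd p q I J

namespace NCHelper

variable {n : ℕ}


variable {n : ℕ}

lemma chooseCount_nil_right (I : List (Fin n)) : chooseCount I [] = 1 := by
  unfold chooseCount
  have h : {α : Fin ([] : List (Fin n)).length → Fin I.length |
      StrictMono α ∧ ∀ k, ([] : List (Fin n)).get k = I.get (α k)} = Set.univ := by
    ext α
    simp only [Set.mem_setOf_eq, Set.mem_univ, iff_true]
    exact ⟨fun a _ _ => a.elim0, fun k => k.elim0⟩
  rw [h, Set.ncard_univ]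
  have : IsEmpty (Fin ([] : List (Fin n)).length) := Fin.isEmpty'
  exact Nat.card_unique

lemma chooseCount_nil_left (j : Fin n) (J : List (Fin n)) :
    chooseCount ([] : List (Fin n)) (j :: J) = 0 := by
  unfold chooseCount
  have h : {α : Fin (j :: J).length → Fin ([] : List (Fin n)).length |
      StrictMono α ∧ ∀ k, (j :: J).get k = ([] : List (Fin n)).get (α k)} = ∅ := by
    ext α
    simp only [Set.mem_setOf_eq, Set.mem_empty_iff_false, iff_false]
    exact fun _ => (α ⟨0, by simp⟩).elim0
  rw [h, Set.ncard_empty]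



variable {n : ℕ}

lemma chooseCount_cons (i : Fin n) (I : List (Fin n)) (j : Fin n) (J : List (Fin n)) :
    chooseCount (i :: I) (j :: J) =
      chooseCount I (j :: J) + if j = i then chooseCount I J else 0 := by
  classical
  set A : Set (Fin (J.length + 1) → Fin (I.length + 1)) :=
    {α | StrictMono α ∧ ∀ k, (j :: J).get k = (i :: I).get (α k)} with hA
  have hcc : chooseCount (i :: I) (j :: J) = A.ncard := rfl
  set A1 : Set (Fin (J.length + 1) → Fin (I.length + 1)) := A ∩ {α | α 0 ≠ 0} with hA1
  set A2 : Set (Fin (J.length + 1) → Fin (I.length + 1)) := A ∩ {α | α 0 = 0} with hA2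
  have hunion : A = A1 ∪ A2 := by
    ext α; by_cases h : α 0 = 0 <;> simp [hA1, hA2, h]
  have hdisj : Disjoint A1 A2 := by
    rw [Set.disjoint_left]
    rintro α ⟨-, h1⟩ ⟨-, h2⟩; exact h1 h2
  have hsplit : A.ncard = A1.ncard + A2.ncard := by
    rw [hunion]; exact Set.ncard_union_eq hdisj (Set.toFinite _) (Set.toFinite _)
  -- A1
  have hA1card : A1.ncard = chooseCount I (j :: J) := by
    have hinj : Function.Injective
        (fun β : Fin (J.length + 1) → Fin I.length => Fin.succ ∘ β) := by
      intro β β' h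
      funext k
      exact Fin.succ_injective _ (congrFun h k)
    have himg : A1 = (fun β : Fin (J.length + 1) → Fin I.length => Fin.succ ∘ β) ''
        {β : Fin (J.length + 1) → Fin I.length |
          StrictMono β ∧ ∀ k, (j :: J).get k = I.get (β k)} := by
      ext α
      constructor
      · rintro ⟨⟨hmono, hcompat⟩, h0⟩
        have hne : ∀ k, α k ≠ 0 := by
          intro k
          have h1 : α 0 ≤ α k := hmono.monotone (Fin.zero_le k)
          have h2 : (0 : Fin (I.length + 1)) < α 0 := Fin.pos_of_ne_zero h0
          exact Fin.pos_iff_ne_zero.mp (lt_of_lt_of_le h2 h1)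
        set β : Fin (J.length + 1) → Fin I.length := fun k => (α k).pred (hne k) with hβdef
        have hβ : ∀ k, α k = (β k).succ := fun k => (Fin.succ_pred _ _).symm
        refine ⟨β, ⟨?_, ?_⟩, ?_⟩
        · intro a b hab
          rw [← Fin.succ_lt_succ_iff, ← hβ, ← hβ]
          exact hmono hab
        · intro k
          rw [hcompat k, hβ k]
          simp
        · funext k
          exact (hβ k).symm
      · rintro ⟨β, ⟨hmono, hcompat⟩, rfl⟩
        refine ⟨⟨?_, ?_⟩, ?_⟩
        · intro a b hab
          exact Fin.succ_lt_succ_iff.mpr (hmono hab)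
        · intro k
          simpa using hcompat k
        · simp [Fin.succ_ne_zero]
    rw [himg, Set.ncard_image_of_injective _ hinj]
    rfl
  -- A2
  have hA2card : A2.ncard = if j = i then chooseCount I J else 0 := by
    by_cases hji : j = i
    · subst hji
      rw [if_pos rfl]
      have hinj : Function.Injective
          (fun γ : Fin J.length → Fin I.length => (Fin.cons 0 (fun t => (γ t).succ) : Fin (J.length+1) → Fin (I.length+1))) := by
        intro γ γ' h
        funext t
        have := congrFun h t.succ
        simp only [Fin.cons_succ] at this
        exact Fin.succ_injective _ this
      have himg : A2 = (fun γ : Fin J.length → Fin I.length =>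
          (Fin.cons 0 (fun t => (γ t).succ) : Fin (J.length+1) → Fin (I.length+1))) ''
          {γ : Fin J.length → Fin I.length |
            StrictMono γ ∧ ∀ k, J.get k = I.get (γ k)} := by
        ext α
        constructor
        · rintro ⟨⟨hmono, hcompat⟩, h0⟩
          have hne : ∀ t : Fin J.length, α t.succ ≠ 0 := by
            intro t
            have h1 : α 0 < α t.succ := hmono (Fin.succ_pos t)
            rw [h0] at h1
            exact Fin.pos_iff_ne_zero.mp h1
          set γ : Fin J.length → Fin I.length := fun t => (α t.succ).pred (hne t) with hγdef
          have hγ : ∀ t, α t.succ = (γ t).succ := fun t => (Fin.succ_pred _ _).symm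
          refine ⟨γ, ⟨?_, ?_⟩, ?_⟩
          · intro a b hab
            rw [← Fin.succ_lt_succ_iff, ← hγ, ← hγ]
            exact hmono (Fin.succ_lt_succ_iff.mpr hab)
          · intro t
            have h2 := hcompat t.succ
            rw [hγ t] at h2
            simpa using h2
          · funext k
            rcases Fin.eq_zero_or_eq_succ k with rfl | ⟨t, rfl⟩
            · simp only [Fin.cons_zero]
              exact h0.symm
            · simp only [Fin.cons_succ]
              exact (hγ t).symm
        · rintro ⟨γ, ⟨hmono, hcompat⟩, rfl⟩
          refine ⟨⟨?_, ?_⟩, ?_⟩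
          · intro a b hab
            rcases Fin.eq_zero_or_eq_succ b with rfl | ⟨t, rfl⟩
            · exact absurd hab (by simp)
            · rcases Fin.eq_zero_or_eq_succ a with rfl | ⟨u, rfl⟩
              · simp only [Fin.cons_zero, Fin.cons_succ]
                exact Fin.succ_pos _
              · simp only [Fin.cons_succ]
                exact Fin.succ_lt_succ_iff.mpr (hmono (Fin.succ_lt_succ_iff.mp hab))
          · intro k
            rcases Fin.eq_zero_or_eq_succ k with rfl | ⟨t, rfl⟩
            · simp
            · simpa using hcompat t
          · simp
      rw [himg, Set.ncard_image_of_injective _ hinj]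
      rfl
    · rw [if_neg hji]
      have : A2 = ∅ := by
        ext α
        simp only [Set.mem_empty_iff_false, iff_false]
        rintro ⟨⟨-, hcompat⟩, h0⟩
        have h2 := hcompat (0 : Fin (J.length + 1))
        rw [h0] at h2
        simp at h2
        exact hji h2
      rw [this, Set.ncard_empty]
  rw [hcc, hsplit, hA1card, hA2card]



variable {n : ℕ}

lemma sublist_of_chooseCount_ne_zero {I J : List (Fin n)}
    (h : chooseCount I J ≠ 0) : J.Sublist I := by
  obtain ⟨α, hmono, hcompat⟩ := Set.nonempty_of_ncard_ne_zero h
  exact List.sublist_iff_exists_fin_orderEmbedding_get_eq.mpr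
    ⟨OrderEmbedding.ofStrictMono α hmono, hcompat⟩

lemma mle_of_chooseCount_ne_zero {I J : List (Fin n)}
    (h : chooseCount I J ≠ 0) : (J : Multiset (Fin n)) ≤ (I : Multiset (Fin n)) :=
  Multiset.coe_le.mpr (sublist_of_chooseCount_ne_zero h).subperm

lemma chooseCount_le_choose (I J : List (Fin n)) :
    chooseCount I J ≤ I.length.choose J.length := by
  classical
  unfold chooseCount
  have hinj : Set.InjOn (fun α : Fin J.length → Fin I.length => Finset.image α Finset.univ)
      {α : Fin J.length → Fin I.length | StrictMono α ∧ ∀ k, J.get k = I.get (α k)} := by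
    rintro α ⟨hα, -⟩ β ⟨hβ, -⟩ hab
    simp only at hab
    have hcard : (Finset.image α Finset.univ).card = J.length := by
      rw [Finset.card_image_of_injective _ hα.injective, Finset.card_univ, Fintype.card_fin]
    have h1 := Finset.orderEmbOfFin_unique hcard
      (f := α) (fun x => Finset.mem_image_of_mem _ (Finset.mem_univ x)) hα
    have h2 := Finset.orderEmbOfFin_unique hcard
      (f := β) (fun x => hab ▸ Finset.mem_image_of_mem _ (Finset.mem_univ x)) hβ
    rw [h1, h2]
  calc Set.ncard {α : Fin J.length → Fin I.length |
        StrictMono α ∧ ∀ k, J.get k = I.get (α k)}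
      = ((fun α : Fin J.length → Fin I.length => Finset.image α Finset.univ) ''
        {α | StrictMono α ∧ ∀ k, J.get k = I.get (α k)}).ncard :=
        (Set.ncard_image_of_injOn hinj).symm
    _ ≤ Set.ncard {S : Finset (Fin I.length) | S.card = J.length} := by
        apply Set.ncard_le_ncard _ (Set.toFinite _)
        rintro S ⟨α, ⟨hα, -⟩, rfl⟩
        simp only [Set.mem_setOf_eq]
        rw [Finset.card_image_of_injective _ hα.injective, Finset.card_univ, Fintype.card_fin]
    _ = I.length.choose J.length := by
        rw [Set.ncard_eq_toFinset_card', Set.toFinset_card]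
        have h := Fintype.card_finset_len (α := Fin I.length) J.length
        rw [Fintype.card_fin] at h
        rw [← h]
        exact Fintype.card_congr (Equiv.subtypeEquivRight (by intro S; simp))



variable {n : ℕ}

noncomputable def mdiff {R : Type*} [CommMonoid R] (w : Fin n → R) (I J : List (Fin n)) : R :=
  (((I : Multiset (Fin n)) - (J : Multiset (Fin n))).map w).prod

lemma mdiff_nil_left {R : Type*} [CommMonoid R] (w : Fin n → R) (K : List (Fin n)) :
    mdiff w [] K = 1 := by
  unfold mdiff
  rw [Multiset.coe_nil, Multiset.zero_sub, Multiset.map_zero, Multiset.prod_zero]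

lemma mdiff_cons_of_le {R : Type*} [CommMonoid R] {K I : List (Fin n)}
    (h : (K : Multiset (Fin n)) ≤ (I : Multiset (Fin n))) (w : Fin n → R) (i : Fin n) :
    mdiff w (i :: I) K = w i * mdiff w I K := by
  unfold mdiff
  rw [← Multiset.cons_coe, Multiset.cons_sub_of_le _ h, Multiset.map_cons, Multiset.prod_cons]

lemma mdiff_cons_cons {R : Type*} [CommMonoid R] (w : Fin n → R) (i : Fin n)
    (K J : List (Fin n)) : mdiff w (i :: K) (i :: J) = mdiff w K J := by
  unfold mdiff
  rw [← Multiset.cons_coe, ← Multiset.cons_coe, Multiset.sub_cons, Multiset.erase_cons_head]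

lemma summable_of_support_sublist {M : Type*} [AddCommMonoid M] [TopologicalSpace M]
    {f : List (Fin n) → M} (I : List (Fin n)) (h : ∀ K, f K ≠ 0 → K.Sublist I) :
    Summable f := by
  classical
  refine summable_of_ne_finset_zero (s := I.sublists.toFinset) ?_
  intro K hK
  by_contra h0
  exact hK (List.mem_toFinset.mpr (List.mem_sublists.mpr (h K h0)))

noncomputable def kaux (i : Fin n) (I : List (Fin n)) : List (Fin n) → ℕ
  | [] => 0
  | k :: K' => if k = i then chooseCount I K' else 0

lemma chooseCount_cons' (i : Fin n) (I K : List (Fin n)) :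
    chooseCount (i :: I) K = chooseCount I K + kaux i I K := by
  cases K with
  | nil => rw [chooseCount_nil_right, chooseCount_nil_right]; rfl
  | cons k K' => rw [chooseCount_cons]; rfl

lemma cons_injective (i : Fin n) : Function.Injective (fun K : List (Fin n) => i :: K) := by
  intro a b h
  simpa using h

variable {R : Type*} [Field R] [TopologicalSpace R] [IsTopologicalRing R] [T2Space R]

lemma key_identity (u v : Fin n → R) : ∀ (I J : List (Fin n)),
    ∑' K : List (Fin n), (chooseCount I K : R) * (chooseCount K J : R) *
        mdiff u I K * mdiff v K J
      = (chooseCount I J : R) * mdiff (fun x => u x + v x) I J := by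
  intro I
  induction I with
  | nil =>
    intro J
    rw [tsum_eq_single ([] : List (Fin n)) ?_]
    · rw [chooseCount_nil_right, mdiff_nil_left, mdiff_nil_left, mdiff_nil_left]
      push_cast
      ring
    · intro K hK
      have h0 : chooseCount ([] : List (Fin n)) K = 0 := by
        by_contra h
        exact hK (List.sublist_nil.mp (sublist_of_chooseCount_ne_zero h))
      simp [h0]
  | cons i I IH =>
    intro J
    have hterm : ∀ K, (chooseCount (i :: I) K : R) * (chooseCount K J : R) *
        mdiff u (i :: I) K * mdiff v K J
        = u i * ((chooseCount I K : R) * (chooseCount K J : R) * mdiff u I K * mdiff v K J)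
          + (kaux i I K : R) * (chooseCount K J : R) * mdiff u (i :: I) K * mdiff v K J := by
      intro K
      rw [chooseCount_cons' i I K]
      push_cast
      by_cases h : chooseCount I K = 0
      · simp [h]
      · rw [mdiff_cons_of_le (mle_of_chooseCount_ne_zero h)]
        ring
    have hs1 : Summable (fun K => u i *
        ((chooseCount I K : R) * (chooseCount K J : R) * mdiff u I K * mdiff v K J)) := by
      apply summable_of_support_sublist I
      intro K hK
      apply sublist_of_chooseCount_ne_zero (I := I) (J := K)
      intro h0
      exact hK (by simp [h0])
    have hs2 : Summable (fun K => (kaux i I K : R) * (chooseCount K J : R) *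
        mdiff u (i :: I) K * mdiff v K J) := by
      apply summable_of_support_sublist (i :: I)
      intro K hK
      cases K with
      | nil => exact absurd (by simp [kaux]) hK
      | cons k K' =>
        by_cases hk : k = i
        · subst hk
          have hcc : chooseCount I K' ≠ 0 := by
            intro h0
            exact hK (by simp [kaux, h0])
          exact (sublist_of_chooseCount_ne_zero hcc).cons_cons k
        · exact absurd (by simp [kaux, hk]) hK
    rw [tsum_congr hterm, Summable.tsum_add hs1 hs2, tsum_mul_left, IH J]
    -- now handle the kaux sum
    have hsupp : (Function.support fun K => (kaux i I K : R) * (chooseCount K J : R) *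
        mdiff u (i :: I) K * mdiff v K J) ⊆ Set.range (fun K : List (Fin n) => i :: K) := by
      intro K hK
      cases K with
      | nil => exact absurd (by simp [kaux]) hK
      | cons k K' =>
        by_cases hk : k = i
        · exact ⟨K', by rw [hk]⟩
        · exact absurd (by simp [kaux, hk]) hK
    rw [← (cons_injective i).tsum_eq hsupp]
    have ht2 : ∀ K', (kaux i I (i :: K') : R) * (chooseCount (i :: K') J : R) *
        mdiff u (i :: I) (i :: K') * mdiff v (i :: K') J
        = (chooseCount I K' : R) * (chooseCount (i :: K') J : R) *
          mdiff u I K' * mdiff v (i :: K') J := by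
      intro K'
      rw [show kaux i I (i :: K') = chooseCount I K' by simp [kaux],
        mdiff_cons_cons]
    rw [tsum_congr ht2]
    cases J with
    | nil =>
      have hpt : ∀ K', (chooseCount I K' : R) * (chooseCount (i :: K') [] : R) *
          mdiff u I K' * mdiff v (i :: K') []
          = v i * ((chooseCount I K' : R) * (chooseCount K' [] : R) *
            mdiff u I K' * mdiff v K' []) := by
        intro K'
        rw [chooseCount_nil_right, chooseCount_nil_right,
          mdiff_cons_of_le (by rw [Multiset.coe_nil]; exact Multiset.zero_le _)]
        push_cast
        ring
      rw [tsum_congr hpt, tsum_mul_left, IH []]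
      rw [chooseCount_nil_right, chooseCount_nil_right,
        mdiff_cons_of_le (by rw [Multiset.coe_nil]; exact Multiset.zero_le _)]
      push_cast
      ring
    | cons j J' =>
      have hccK : ∀ K', (chooseCount (i :: K') (j :: J') : ℕ)
          = chooseCount K' (j :: J') + if j = i then chooseCount K' J' else 0 :=
        fun K' => chooseCount_cons i K' j J'
      by_cases hji : j = i
      · subst hji
        have hccK' : ∀ K' : List (Fin n), chooseCount (j :: K') (j :: J')
            = chooseCount K' (j :: J') + chooseCount K' J' := by
          intro K'
          rw [chooseCount_cons]
          simp
        have hsplit2 : ∀ K', (chooseCount I K' : R) * (chooseCount (j :: K') (j :: J') : R) *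
            mdiff u I K' * mdiff v (j :: K') (j :: J')
            = (chooseCount I K' : R) * (chooseCount K' (j :: J') : R) *
                mdiff u I K' * mdiff v (j :: K') (j :: J')
              + (chooseCount I K' : R) * (chooseCount K' J' : R) *
                mdiff u I K' * mdiff v K' J' := by
          intro K'
          rw [hccK' K', mdiff_cons_cons]
          push_cast
          ring
        have hsA : Summable (fun K' => (chooseCount I K' : R) * (chooseCount K' (j :: J') : R) *
            mdiff u I K' * mdiff v (j :: K') (j :: J')) := by
          apply summable_of_support_sublist I
          intro K hK
          apply sublist_of_chooseCount_ne_zero (I := I) (J := K)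
          intro h0
          exact hK (by simp [h0])
        have hsB : Summable (fun K' => (chooseCount I K' : R) * (chooseCount K' J' : R) *
            mdiff u I K' * mdiff v K' J') := by
          apply summable_of_support_sublist I
          intro K hK
          apply sublist_of_chooseCount_ne_zero (I := I) (J := K)
          intro h0
          exact hK (by simp [h0])
        rw [tsum_congr hsplit2, Summable.tsum_add hsA hsB, IH J']
        have hA : ∀ K', (chooseCount I K' : R) * (chooseCount K' (j :: J') : R) *
            mdiff u I K' * mdiff v (j :: K') (j :: J')
            = v j * ((chooseCount I K' : R) * (chooseCount K' (j :: J') : R) *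
              mdiff u I K' * mdiff v K' (j :: J')) := by
          intro K'
          by_cases h : chooseCount K' (j :: J') = 0
          · simp [h]
          · rw [mdiff_cons_of_le (mle_of_chooseCount_ne_zero h)]
            ring
        rw [tsum_congr hA, tsum_mul_left, IH (j :: J')]
        -- RHS
        rw [chooseCount_cons' j (I := I) (K := j :: J')]
        rw [show kaux j I (j :: J') = chooseCount I J' by simp [kaux]]
        push_cast
        rw [add_mul]
        have hM2 : (chooseCount I J' : R) * mdiff (fun x => u x + v x) (j :: I) (j :: J')
            = (chooseCount I J' : R) * mdiff (fun x => u x + v x) I J' := by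
          rw [mdiff_cons_cons]
        rw [hM2]
        by_cases h : chooseCount I (j :: J') = 0
        · simp [h]
        · rw [mdiff_cons_of_le (mle_of_chooseCount_ne_zero h)]
          ring
      · have hsplit2 : ∀ K', (chooseCount I K' : R) * (chooseCount (i :: K') (j :: J') : R) *
            mdiff u I K' * mdiff v (i :: K') (j :: J')
            = v i * ((chooseCount I K' : R) * (chooseCount K' (j :: J') : R) *
              mdiff u I K' * mdiff v K' (j :: J')) := by
          intro K'
          rw [hccK K', if_neg hji]
          by_cases h : chooseCount K' (j :: J') = 0
          · simp [h]
          · rw [mdiff_cons_of_le (mle_of_chooseCount_ne_zero h)]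
            push_cast
            ring
        rw [tsum_congr hsplit2, tsum_mul_left, IH (j :: J')]
        -- RHS
        rw [chooseCount_cons' i (I := I) (K := j :: J')]
        rw [show kaux i I (j :: J') = 0 by simp [kaux, hji]]
        push_cast
        by_cases h : chooseCount I (j :: J') = 0
        · simp [h]
        · rw [mdiff_cons_of_le (mle_of_chooseCount_ne_zero h)]
          ring



variable {n : ℕ}



lemma mprod_nonneg {f : Fin n → ℝ} (hf : ∀ i, 0 ≤ f i) (M : Multiset (Fin n)) :
    0 ≤ (M.map f).prod := by
  induction M using Multiset.induction with
  | empty => simp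
  | cons i M IH => rw [Multiset.map_cons, Multiset.prod_cons]; exact mul_nonneg (hf i) IH

lemma mprod_le_mprod {f g : Fin n → ℝ} (hf : ∀ i, 0 ≤ f i) (hfg : ∀ i, f i ≤ g i)
    (M : Multiset (Fin n)) : (M.map f).prod ≤ (M.map g).prod := by
  induction M using Multiset.induction with
  | empty => simp
  | cons i M IH =>
    rw [Multiset.map_cons, Multiset.prod_cons, Multiset.map_cons, Multiset.prod_cons]
    exact mul_le_mul (hfg i) IH (mprod_nonneg hf M) ((hf i).trans (hfg i))

lemma mprod_const_mul (c : ℝ) (f : Fin n → ℝ) (M : Multiset (Fin n)) :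
    (M.map (fun i => c * f i)).prod = c ^ (Multiset.card M) * (M.map f).prod := by
  induction M using Multiset.induction with
  | empty => simp
  | cons i M IH =>
    rw [Multiset.map_cons, Multiset.prod_cons, Multiset.map_cons, Multiset.prod_cons, IH,
      Multiset.card_cons, pow_succ]
    ring

lemma mprod_sub_mul {I J : List (Fin n)} (h : (J : Multiset (Fin n)) ≤ I) (f : Fin n → ℝ) :
    (((I : Multiset (Fin n)) - J).map f).prod * ((J : Multiset (Fin n)).map f).prod
      = ((I : Multiset (Fin n)).map f).prod := by
  rw [← Multiset.prod_add, ← Multiset.map_add, tsub_add_cancel_of_le h]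

/-- The key analytic summability lemma. -/
lemma summable_cc_mul (a : List (Fin n) → ℂ) (p : Fin n → ℂ) (r : Fin n → ℝ)
    (hr : ∀ i, 0 < r i)
    (hconv : ∀ z : Fin n → ℂ, (∀ i, ‖z i - p i‖ < r i) →
      Summable (fun I : List (Fin n) =>
        ‖a I‖ * ‖wprod (fun i => z i - p i) I‖))
    (w : Fin n → ℝ) (hw0 : ∀ i, 0 ≤ w i) (hw : ∀ i, w i < r i) (J : List (Fin n)) :
    Summable (fun I => (chooseCount I J : ℝ) * ‖a I‖ * mdiff w I J) := by
  classical
  set k := J.length with hk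
  set ρ : Fin n → ℝ := fun i => (w i + r i) / 2 with hρ
  have hρ0 : ∀ i, 0 < ρ i := fun i => by
    have := hw0 i; have := hr i; simp only [hρ]; linarith
  have hwρ : ∀ i, w i < ρ i := fun i => by
    have := hw i; simp only [hρ]; linarith
  have hρr : ∀ i, ρ i < r i := fun i => by
    have := hw i; simp only [hρ]; linarith
  set θ : ℝ := max (1/2 : ℝ)
    ((Finset.univ.sup fun i : Fin n => Real.toNNReal (w i / ρ i) : NNReal) : ℝ) with hθ
  have hθhalf : (1/2 : ℝ) ≤ θ := le_max_left _ _
  have hθ0 : 0 < θ := lt_of_lt_of_le (by norm_num) hθhalf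
  have hθi : ∀ i, w i ≤ θ * ρ i := by
    intro i
    have h1 : w i / ρ i ≤ θ := by
      have h2 : (Real.toNNReal (w i / ρ i) : ℝ) ≤
          ((Finset.univ.sup fun i : Fin n => Real.toNNReal (w i / ρ i) : NNReal) : ℝ) :=
        NNReal.coe_le_coe.mpr (Finset.le_sup (f := fun i : Fin n => Real.toNNReal (w i / ρ i))
          (Finset.mem_univ i))
      have h3 : w i / ρ i ≤ (Real.toNNReal (w i / ρ i) : ℝ) :=
        Real.le_coe_toNNReal _
      exact h3.trans (h2.trans (le_max_right _ _))
    calc w i = (w i / ρ i) * ρ i := (div_mul_cancel₀ _ (hρ0 i).ne').symm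
    _ ≤ θ * ρ i := mul_le_mul_of_nonneg_right h1 (hρ0 i).le
  have hθ1 : θ < 1 := by
    apply max_lt (by norm_num)
    rw [show (1 : ℝ) = ((1 : NNReal) : ℝ) by norm_num, NNReal.coe_lt_coe]
    apply Finset.sup_lt_iff (by norm_num : (⊥ : NNReal) < 1) |>.mpr
    intro i _
    rw [Real.toNNReal_lt_one]
    rw [div_lt_one (hρ0 i)]
    exact hwρ i
  set φ : ℝ := (1 + θ) / 2 with hφ
  have hθφ : θ < φ := by simp only [hφ]; linarith
  have hφ1 : φ < 1 := by simp only [hφ]; linarith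
  have hφ0 : 0 < φ := by simp only [hφ]; linarith
  set ψ : ℝ := θ / φ with hψ
  have hψ0 : 0 ≤ ψ := div_nonneg hθ0.le hφ0.le
  have hψ1 : ψ < 1 := (div_lt_one hφ0).mpr hθφ
  have hsummψ : Summable (fun m : ℕ => (m : ℝ) ^ k * ψ ^ m) :=
    summable_pow_mul_geometric_of_norm_lt_one k (by rwa [Real.norm_eq_abs, abs_of_nonneg hψ0])
  set C : ℝ := ∑' m : ℕ, (m : ℝ) ^ k * ψ ^ m with hC
  have hCle : ∀ m : ℕ, (m : ℝ) ^ k * ψ ^ m ≤ C :=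
    fun m => Summable.le_tsum hsummψ m (fun j _ => mul_nonneg (pow_nonneg (Nat.cast_nonneg j) k)
      (pow_nonneg hψ0 j))
  have hC0 : 0 ≤ C := le_trans (by positivity) (hCle 1)
  -- the comparison point
  set z : Fin n → ℂ := fun i => p i + ((φ * ρ i : ℝ) : ℂ) with hz
  have hzmem : ∀ i, ‖z i - p i‖ < r i := by
    intro i
    simp only [hz, add_sub_cancel_left, Complex.norm_real, Real.norm_eq_abs]
    rw [abs_of_nonneg (mul_nonneg hφ0.le (hρ0 i).le)]
    calc φ * ρ i < 1 * ρ i := by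
          exact mul_lt_mul_of_pos_right hφ1 (hρ0 i)
    _ = ρ i := one_mul _
    _ < r i := hρr i
  have hzsum := hconv z hzmem
  have hzeq : ∀ I : List (Fin n), ‖wprod (fun i => z i - p i) I‖
      = ((I : Multiset (Fin n)).map (fun i => φ * ρ i)).prod := by
    intro I
    unfold wprod
    rw [List.norm_prod]
    rw [← Multiset.prod_coe]
    congr 1
    rw [← Multiset.map_coe, ← Multiset.map_coe, Multiset.map_map]
    apply Multiset.map_congr rfl
    intro i _
    simp only [Function.comp_apply, hz, add_sub_cancel_left, Complex.norm_real, Real.norm_eq_abs]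
    exact abs_of_nonneg (mul_nonneg hφ0.le (hρ0 i).le)
  -- the dominating summable function
  set PJ : ℝ := ((J : Multiset (Fin n)).map ρ).prod with hPJ
  have hPJ0 : 0 < PJ := by
    rw [hPJ]
    induction (J : Multiset (Fin n)) using Multiset.induction with
    | empty => simp
    | cons i M IH => rw [Multiset.map_cons, Multiset.prod_cons]; exact mul_pos (hρ0 i) IH
  have hdom : Summable (fun I : List (Fin n) => ((2:ℝ)^k * C / PJ) *
      (‖a I‖ * ((I : Multiset (Fin n)).map (fun i => φ * ρ i)).prod)) := by
    apply Summable.mul_left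
    exact hzsum.congr (fun I => by rw [hzeq I])
  refine Summable.of_nonneg_of_le (fun I => ?_) (fun I => ?_) hdom
  · exact mul_nonneg (mul_nonneg (Nat.cast_nonneg _) (norm_nonneg _))
      (mprod_nonneg hw0 _)
  by_cases hcc : chooseCount I J = 0
  · rw [hcc]
    push_cast
    rw [zero_mul, zero_mul]
    apply mul_nonneg (div_nonneg (mul_nonneg (by positivity) hC0) hPJ0.le)
    exact mul_nonneg (norm_nonneg _)
      (mprod_nonneg (fun i => mul_nonneg hφ0.le (hρ0 i).le) _)
  · -- main estimate
    have hJI : (J : Multiset (Fin n)) ≤ (I : Multiset (Fin n)) :=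
      mle_of_chooseCount_ne_zero hcc
    have hkm : k ≤ I.length := hk ▸ (sublist_of_chooseCount_ne_zero hcc).length_le
    set m := I.length with hm
    have hcard : Multiset.card ((I : Multiset (Fin n)) - (J : Multiset (Fin n))) = m - k := by
      rw [Multiset.card_sub hJI]
      simp [hm, hk]
    have h1 : mdiff w I J ≤ θ ^ (m - k) * mdiff ρ I J := by
      unfold mdiff
      calc (((I : Multiset (Fin n)) - (J : Multiset (Fin n))).map w).prod
          ≤ (((I : Multiset (Fin n)) - (J : Multiset (Fin n))).map (fun i => θ * ρ i)).prod :=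
            mprod_le_mprod hw0 hθi _
        _ = θ ^ (m - k) * (((I : Multiset (Fin n)) - (J : Multiset (Fin n))).map ρ).prod := by
            rw [mprod_const_mul, hcard]
    have h2 : mdiff ρ I J = ((I : Multiset (Fin n)).map ρ).prod / PJ := by
      rw [eq_div_iff hPJ0.ne']
      exact mprod_sub_mul hJI ρ
    have h3 : (chooseCount I J : ℝ) ≤ (m : ℝ) ^ k := by
      calc (chooseCount I J : ℝ) ≤ (m.choose k : ℝ) := by
            exact_mod_cast chooseCount_le_choose I J
      _ ≤ (m : ℝ) ^ k := by exact_mod_cast Nat.choose_le_pow m k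
    have h4 : θ ^ (m - k) ≤ 2 ^ k * θ ^ m := by
      have hpow : θ ^ (m - k) * θ ^ k = θ ^ m := pow_sub_mul_pow θ hkm
      have hge : (1:ℝ) ≤ θ ^ k * 2 ^ k := by
        calc (1 : ℝ) = ((1/2 : ℝ) * 2) ^ k := by norm_num
        _ = (1/2 : ℝ)^k * 2^k := mul_pow _ _ _
        _ ≤ θ ^ k * 2 ^ k := mul_le_mul_of_nonneg_right
            (pow_le_pow_left₀ (by norm_num) hθhalf k) (by positivity)
      calc θ ^ (m-k) ≤ θ ^ (m-k) * (θ ^ k * 2 ^ k) :=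
            le_mul_of_one_le_right (pow_nonneg hθ0.le _) hge
        _ = 2 ^ k * (θ ^ (m-k) * θ ^ k) := by ring
        _ = 2 ^ k * θ ^ m := by rw [hpow]
    have h5 : (m : ℝ) ^ k * θ ^ m ≤ C * φ ^ m := by
      have hθm : θ ^ m = ψ ^ m * φ ^ m := by
        rw [hψ, div_pow, div_mul_cancel₀ _ (pow_ne_zero _ hφ0.ne')]
      rw [hθm, ← mul_assoc]
      exact mul_le_mul_of_nonneg_right (hCle m) (pow_nonneg hφ0.le m)
    have h6 : φ ^ m * ((I : Multiset (Fin n)).map ρ).prod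
        = ((I : Multiset (Fin n)).map (fun i => φ * ρ i)).prod := by
      rw [mprod_const_mul, Multiset.coe_card]
    have hρI0 : 0 ≤ ((I : Multiset (Fin n)).map ρ).prod := mprod_nonneg (fun i => (hρ0 i).le) _
    have hmd0 : 0 ≤ mdiff ρ I J := mprod_nonneg (fun i => (hρ0 i).le) _
    calc (chooseCount I J : ℝ) * ‖a I‖ * mdiff w I J
        ≤ (chooseCount I J : ℝ) * ‖a I‖ * (θ ^ (m - k) * mdiff ρ I J) := by
          apply mul_le_mul_of_nonneg_left h1
            (mul_nonneg (Nat.cast_nonneg _) (norm_nonneg _))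
      _ ≤ (m : ℝ) ^ k * ‖a I‖ * (θ ^ (m - k) * mdiff ρ I J) := by
          apply mul_le_mul_of_nonneg_right _ (mul_nonneg (pow_nonneg hθ0.le _) hmd0)
          exact mul_le_mul_of_nonneg_right h3 (norm_nonneg _)
      _ ≤ (m : ℝ) ^ k * ‖a I‖ * ((2 ^ k * θ ^ m) * mdiff ρ I J) := by
          apply mul_le_mul_of_nonneg_left (mul_le_mul_of_nonneg_right h4 hmd0)
            (mul_nonneg (pow_nonneg (Nat.cast_nonneg _) _) (norm_nonneg _))
      _ = 2 ^ k * ((m:ℝ)^k * θ ^ m) * ‖a I‖ * mdiff ρ I J := by ring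
      _ ≤ 2 ^ k * (C * φ ^ m) * ‖a I‖ * mdiff ρ I J := by
          apply mul_le_mul_of_nonneg_right _ hmd0
          apply mul_le_mul_of_nonneg_right _ (norm_nonneg _)
          exact mul_le_mul_of_nonneg_left h5 (by positivity)
      _ = (2^k * C / PJ) * (‖a I‖ * (φ ^ m * ((I : Multiset (Fin n)).map ρ).prod)) := by
          rw [h2]
          ring
      _ = (2^k * C / PJ) * (‖a I‖ *
            ((I : Multiset (Fin n)).map (fun i => φ * ρ i)).prod) := by rw [h6]
  


variable {n : ℕ}



lemma abs_mdiffC (w : Fin n → ℂ) (I J : List (Fin n)) :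
    ‖mdiff w I J‖ = mdiff (fun i => ‖w i‖) I J := by
  unfold mdiff
  rw [show ‖(Multiset.map w ((I : Multiset (Fin n)) - (J : Multiset (Fin n)))).prod‖
      = (normHom : ℂ →*₀ ℝ) (Multiset.map w ((I : Multiset (Fin n)) - (J : Multiset (Fin n)))).prod from rfl,
    map_multiset_prod, Multiset.map_map]
  rfl


end NCHelper

section
open NCHelper
/-- cocycle property of re-expansion: if `f` converges on
`P(p,r)`, `P(q,r') ⊆ P(p,r)` and `P(s,r'') ⊆ P(q,r')`, then
`α(q,s) ∘ α(p,q) = α(p,s)` on such `f`. -/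
theorem reexpansion_cocycle {n : ℕ}
    (a : List (Fin n) → ℂ) (p : Fin n → ℂ) (r : Fin n → ℝ)
    (hr : ∀ i, 0 < r i)
    (hconv : ∀ z : Fin n → ℂ, (∀ i, ‖z i - p i‖ < r i) →
      Summable (fun I : List (Fin n) =>
        ‖a I‖ * ‖wprod (fun i => z i - p i) I‖))
    (q : Fin n → ℂ) (r' : Fin n → ℝ) (hr' : ∀ i, 0 < r' i)
    (hsub : ∀ z : Fin n → ℂ, (∀ i, ‖z i - q i‖ < r' i) →
      ∀ i, ‖z i - p i‖ < r i)
    (s : Fin n → ℂ) (r'' : Fin n → ℝ) (hr'' : ∀ i, 0 < r'' i)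
    (hsub' : ∀ z : Fin n → ℂ, (∀ i, ‖z i - s i‖ < r'' i) →
      ∀ i, ‖z i - q i‖ < r' i) :
    reExp q s (reExp p q a) = reExp p s a := by
  classical
  funext J
  set u : Fin n → ℝ := fun i => ‖q i - p i‖ with hu
  set v : Fin n → ℝ := fun i => ‖s i - q i‖ with hv
  have hu0 : ∀ i, 0 ≤ u i := fun i => norm_nonneg _
  have hv0 : ∀ i, 0 ≤ v i := fun i => norm_nonneg _
  have hqmem : ∀ i, ‖q i - p i‖ < r i :=
    hsub q (fun i => by simpa using hr' i)
  have hsv : ∀ i, ‖s i - q i‖ < r' i :=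
    hsub' s (fun i => by simpa using hr'' i)
  -- the phase point showing u + v < r
  have huv : ∀ i, u i + v i < r i := by
    intro i
    set z : Fin n → ℂ := fun i => if q i = p i then s i
      else q i + (v i : ℂ) * (q i - p i) / (u i : ℂ) with hz
    have hzq : ∀ i, ‖z i - q i‖ < r' i := by
      intro i
      by_cases h : q i = p i
      · simp only [hz, if_pos h]
        exact hsv i
      · simp only [hz, if_neg h]
        have hui : 0 < u i := by
          rw [hu]
          exact norm_pos_iff.mpr (sub_ne_zero.mpr h)
        rw [add_sub_cancel_left, norm_div, norm_mul, Complex.norm_real, Complex.norm_real, Real.norm_eq_abs, Real.norm_eq_abs]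
        rw [abs_of_nonneg (hv0 i), abs_of_nonneg (hu0 i)]
        rw [show ‖q i - p i‖ = u i from rfl]
        rw [mul_div_assoc, div_self hui.ne', mul_one]
        exact hsv i
    have hzp := hsub z hzq i
    by_cases h : q i = p i
    · have : u i = 0 := by rw [hu]; simp [h]
      rw [this, zero_add]
      have : z i - p i = s i - q i := by rw [hz]; simp [h]
      rwa [this] at hzp
    · have hui : 0 < u i := norm_pos_iff.mpr (sub_ne_zero.mpr h)
      have huiC : ((u i : ℝ) : ℂ) ≠ 0 := by
        exact_mod_cast hui.ne'
      have hzpi : z i - p i = (q i - p i) * (((u i + v i) / u i : ℝ) : ℂ) := by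
        rw [hz]
        simp only [if_neg h]
        push_cast
        field_simp
        ring
      rw [hzpi, norm_mul, Complex.norm_real, Real.norm_eq_abs, abs_of_nonneg
        (div_nonneg (by positivity) (hu0 i))] at hzp
      rw [show ‖q i - p i‖ = u i from rfl] at hzp
      rwa [mul_div_assoc', mul_comm, mul_div_assoc, div_self hui.ne', mul_one] at hzp
  -- summability lemmas
  have hS1 : ∀ K, Summable (fun I => (chooseCount I K : ℝ) *
      ‖a I‖ * mdiff u I K) :=
    fun K => summable_cc_mul a p r hr hconv u hu0 hqmem K
  have hS2 : Summable (fun I => (chooseCount I J : ℝ) * ‖a I‖ *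
      mdiff (fun i => u i + v i) I J) :=
    summable_cc_mul a p r hr hconv _ (fun i => add_nonneg (hu0 i) (hv0 i)) huv J
  have hS1c : ∀ K, Summable (fun I => (chooseCount I K : ℂ) * a I * diffProd p q I K) := by
    intro K
    apply Summable.of_norm
    apply Summable.of_nonneg_of_le (fun I => norm_nonneg _) ?_ (hS1 K)
    intro I
    rw [norm_mul, norm_mul, Complex.norm_natCast,
      show diffProd p q I K = mdiff (fun i => q i - p i) I K from rfl,
      abs_mdiffC]
  -- the double family
  set f : List (Fin n) → List (Fin n) → ℂ := fun K I =>
    ((chooseCount K J : ℂ) * diffProd q s K J) *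
      ((chooseCount I K : ℂ) * a I * diffProd p q I K) with hf
  have hnorm : ∀ K I, ‖f K I‖ = ‖a I‖ *
      ((chooseCount I K : ℝ) * (chooseCount K J : ℝ) * mdiff u I K * mdiff v K J) := by
    intro K I
    rw [hf]
    simp only [norm_mul, Complex.norm_natCast]
    rw [show diffProd p q I K = mdiff (fun i => q i - p i) I K from rfl,
      show diffProd q s K J = mdiff (fun i => s i - q i) K J from rfl,
      abs_mdiffC, abs_mdiffC]
    ring
  have hKsupp : ∀ (g : List (Fin n) → ℂ) (I : List (Fin n)),
      (∀ K, chooseCount I K = 0 → g K = 0) → Summable g := by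
    intro g I hg
    apply summable_of_support_sublist I
    intro K hK
    apply sublist_of_chooseCount_ne_zero (I := I) (J := K)
    intro h0
    exact hK (hg K h0)
  have hsum2 : ∀ I, Summable (fun K => f K I) := by
    intro I
    apply hKsupp _ I
    intro K h0
    rw [hf]
    simp [h0]
  have hsumnorm2 : ∀ I, Summable (fun K => ‖f K I‖) := by
    intro I
    apply summable_of_support_sublist I
    intro K hK
    apply sublist_of_chooseCount_ne_zero (I := I) (J := K)
    intro h0
    exact hK (by rw [hf]; simp [h0])
  have htsumnorm : ∀ I, ∑' K, ‖f K I‖ = ‖a I‖ *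
      ((chooseCount I J : ℝ) * mdiff (fun i => u i + v i) I J) := by
    intro I
    calc ∑' K, ‖f K I‖
        = ∑' K, ‖a I‖ * ((chooseCount I K : ℝ) * (chooseCount K J : ℝ) *
            mdiff u I K * mdiff v K J) := tsum_congr (fun K => hnorm K I)
      _ = ‖a I‖ * ∑' K, ((chooseCount I K : ℝ) * (chooseCount K J : ℝ) *
            mdiff u I K * mdiff v K J) := tsum_mul_left
      _ = ‖a I‖ * ((chooseCount I J : ℝ) *
            mdiff (fun i => u i + v i) I J) := by rw [key_identity u v I J]
  have huncurry : Summable (Function.uncurry f) := by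
    apply Summable.of_norm
    have hswap : Summable (fun IK : List (Fin n) × List (Fin n) => ‖f IK.2 IK.1‖) := by
      apply (summable_prod_of_nonneg (fun IK => norm_nonneg _)).mpr
      constructor
      · intro I
        exact hsumnorm2 I
      · apply Summable.congr (f := fun I => (chooseCount I J : ℝ) * ‖a I‖ *
          mdiff (fun i => u i + v i) I J) hS2
        intro I
        rw [htsumnorm I]
        ring
    have := (Equiv.prodComm (List (Fin n)) (List (Fin n))).summable_iff.mpr hswap
    exact this.congr (fun KI => rfl)
  -- main computation
  have hlhs : reExp q s (reExp p q a) J = ∑' K, ∑' I, f K I := by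
    unfold reExp
    apply tsum_congr
    intro K
    rw [show (chooseCount K J : ℂ) * (∑' I, (chooseCount I K : ℂ) * a I * diffProd p q I K) *
        diffProd q s K J
      = ((chooseCount K J : ℂ) * diffProd q s K J) *
        (∑' I, (chooseCount I K : ℂ) * a I * diffProd p q I K) by ring]
    rw [← tsum_mul_left]
  rw [hlhs]
  rw [← Summable.tsum_comm' huncurry (fun K => (hS1c K).mul_left _) hsum2]
  -- now the inner sum over K
  have hinner : ∀ I, ∑' K, f K I = (chooseCount I J : ℂ) * a I * diffProd p s I J := by
    intro I
    calc ∑' K, f K I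
        = ∑' K, a I * ((chooseCount I K : ℂ) * (chooseCount K J : ℂ) *
            mdiff (fun i => q i - p i) I K * mdiff (fun i => s i - q i) K J) := by
          apply tsum_congr
          intro K
          simp only [hf]
          rw [show diffProd p q I K = mdiff (fun i => q i - p i) I K from rfl,
            show diffProd q s K J = mdiff (fun i => s i - q i) K J from rfl]
          ring
      _ = a I * ∑' K, ((chooseCount I K : ℂ) * (chooseCount K J : ℂ) *
            mdiff (fun i => q i - p i) I K * mdiff (fun i => s i - q i) K J) := tsum_mul_left
      _ = a I * ((chooseCount I J : ℂ) *
            mdiff (fun i => (q i - p i) + (s i - q i)) I J) := by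
          rw [key_identity (fun i => q i - p i) (fun i => s i - q i) I J]
      _ = (chooseCount I J : ℂ) * a I * diffProd p s I J := by
          rw [show (fun i => (q i - p i) + (s i - q i)) = fun i => s i - p i by
            funext i; ring]
          rw [show diffProd p s I J = mdiff (fun i => s i - p i) I J from rfl]
          ring
  rw [tsum_congr hinner]
  rfl

end
end
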